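/- Fix μ > 0 and n ≥ 1, and let q(x,t) = ∫₀^∞ (2πs)^(−n/2) e^(−‖x‖²/(2s)) · s^(μ−1) e^(−s/t) / (t^μ Γ(μ)) ds for x ∈ ℝⁿ and t > 0 be the density of the n-dimensional process (B¹(G₁(t)), …, Bⁿ(G₁(t))). Then q satisfies the partial differential equation 4 ∂q/∂t = (2μ − n) Δq − Δ( x · ∇q ) for all x ∈ ℝⁿ with x ≠ 0 and t > 0, where Δ = Σ_{i=1}^n ∂²/∂x_i² is the Laplacian and x · ∇q = Σ_{i=1}^n x_i ∂q/∂x_i. -/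

import Mathlib

open MeasureTheory Real Set Filter Topology

/-- The partial derivative `∂f/∂x_i` of a function on `ℝⁿ`. -/
noncomputable def pd {n : ℕ} (f : (Fin n → ℝ) → ℝ) (i : Fin n) (x : Fin n → ℝ) : ℝ :=
  deriv (fun y => f (Function.update x i y)) (x i)

/-- The Laplacian `Δf = Σᵢ ∂²f/∂x_i²` of a function on `ℝⁿ`. -/
noncomputable def lap {n : ℕ} (f : (Fin n → ℝ) → ℝ) (x : Fin n → ℝ) : ℝ :=
  ∑ i, pd (pd f i) i x

/-- The density of the `n`-dimensional process `(B¹(G₁(t)), …, Bⁿ(G₁(t)))`: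
`q(x,t) = ∫₀^∞ (2πs)^(−n/2) e^(−‖x‖²/(2s)) · s^(μ−1) e^(−s/t)/(t^μ Γ(μ))  ds`. -/
noncomputable def qn (n : ℕ) (μ : ℝ) (x : Fin n → ℝ) (t : ℝ) : ℝ :=
  ∫ s in Set.Ioi (0:ℝ),
    (2 * Real.pi * s) ^ (-(n : ℝ) / 2) * Real.exp (-(∑ i, (x i) ^ 2) / (2 * s)) *
      (s ^ (μ - 1) * Real.exp (-s / t) / (t ^ μ * Real.Gamma μ))

/-- The key auxiliary integral. -/
noncomputable def Jf (b r t : ℝ) : ℝ :=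
  ∫ s in Set.Ioi (0:ℝ), s ^ b * Real.exp (-(r / (2*s)) - s / t)

lemma exp_neg_le_aux (m : ℕ) {x : ℝ} (hx : 0 < x) : Real.exp (-x) ≤ ((m:ℝ) / x) ^ m := by
  rcases Nat.eq_zero_or_pos m with hm | hm
  · subst hm; simpa using Real.exp_le_one_iff.2 (by linarith : -x ≤ 0)
  · have hm' : (0:ℝ) < m := by exact_mod_cast hm
    have h1 : x / m ≤ Real.exp (x / m) := by
      have := Real.add_one_le_exp (x / m); linarith
    have h2 : (x / m) ^ m ≤ Real.exp (x / m) ^ m :=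
      pow_le_pow_left₀ (by positivity) h1 m
    have h3 : Real.exp (x / m) ^ m = Real.exp x := by
      rw [← Real.exp_nat_mul]; congr 1; field_simp
    rw [h3] at h2
    have hxm : (0:ℝ) < (x / m) ^ m := by positivity
    calc Real.exp (-x) = (Real.exp x)⁻¹ := by rw [Real.exp_neg]
      _ ≤ ((x / m) ^ m)⁻¹ := by exact inv_anti₀ hxm h2
      _ = ((m:ℝ) / x) ^ m := by rw [← inv_pow, inv_div]

lemma key_exp_bound (m : ℕ) {r s : ℝ} (hr : 0 < r) (hs : 0 < s) (u : ℝ) :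
    Real.exp (-(r / (2*s)) - u) ≤ (2*(m:ℝ)/r) ^ m * s ^ m * Real.exp (-u) := by
  rw [sub_eq_add_neg, Real.exp_add]
  have h1 : Real.exp (-(r / (2*s))) ≤ ((m:ℝ) / (r / (2*s))) ^ m :=
    exp_neg_le_aux m (by positivity)
  have h2 : ((m:ℝ) / (r / (2*s))) ^ m = (2*(m:ℝ)/r) ^ m * s ^ m := by
    rw [← mul_pow]; congr 1; field_simp
  exact mul_le_mul_of_nonneg_right (h2 ▸ h1) (Real.exp_pos _).le

lemma phi_contOn (b r t : ℝ) :
    ContinuousOn (fun s : ℝ => s ^ b * Real.exp (-(r / (2*s)) - s / t)) (Set.Ioi 0) := by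
  apply ContinuousOn.mul
  · exact fun x hx => (Real.continuousAt_rpow_const x b (Or.inl (ne_of_gt hx))).continuousWithinAt
  · apply Real.continuous_exp.comp_continuousOn
    apply ContinuousOn.sub
    · exact (continuousOn_const.div (by fun_prop) (fun x hx => by simp at hx; positivity)).neg
    · fun_prop

lemma Jf_integrableOn (b : ℝ) {r t : ℝ} (hr : 0 < r) (ht : 0 < t) :
    IntegrableOn (fun s : ℝ => s ^ b * Real.exp (-(r / (2*s)) - s / t)) (Set.Ioi 0) := by
  set m : ℕ := ⌈-b⌉₊ + 1 with hm
  have hbm : (-1:ℝ) < b + m := by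
    have := Nat.le_ceil (-b)
    push_cast [hm]
    linarith
  have hg : IntegrableOn (fun s : ℝ => (2*(m:ℝ)/r) ^ m * (s ^ (b + m) * Real.exp (-t⁻¹ * s)))
      (Set.Ioi 0) := by
    have := integrableOn_rpow_mul_exp_neg_mul_rpow (p := 1) (s := b + m) (b := t⁻¹)
      hbm one_pos (by positivity)
    simp only [Real.rpow_one] at this
    exact this.const_mul _
  refine Integrable.mono' hg ((phi_contOn b r t).aestronglyMeasurable measurableSet_Ioi) ?_
  rw [ae_restrict_iff' measurableSet_Ioi]
  refine ae_of_all _ fun s hs => ?_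
  have hs' : (0:ℝ) < s := hs
  have h0 : (0:ℝ) < s ^ b * Real.exp (-(r / (2*s)) - s / t) := by positivity
  rw [Real.norm_eq_abs, abs_of_pos h0]
  calc s ^ b * Real.exp (-(r / (2*s)) - s / t)
      ≤ s ^ b * ((2*(m:ℝ)/r) ^ m * s ^ m * Real.exp (-(s/t))) :=
        mul_le_mul_of_nonneg_left (key_exp_bound m hr hs' (s/t)) (by positivity)
    _ = (2*(m:ℝ)/r) ^ m * (s ^ (b + m) * Real.exp (-t⁻¹ * s)) := by
        rw [Real.rpow_add hs', Real.rpow_natCast]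
        ring_nf
section
variable {b r t : ℝ}

lemma phi_tendsto_atTop (b : ℝ) (hr : 0 < r) (ht : 0 < t) :
    Tendsto (fun s : ℝ => s ^ b * Real.exp (-(r / (2*s)) - s / t)) atTop (𝓝 0) := by
  have h := tendsto_rpow_mul_exp_neg_mul_atTop_nhds_zero b t⁻¹ (by positivity)
  refine squeeze_zero' ?_ ?_ h
  · filter_upwards [eventually_gt_atTop (0:ℝ)] with s hs
    positivity
  · filter_upwards [eventually_gt_atTop (0:ℝ)] with s hs
    refine mul_le_mul_of_nonneg_left ?_ (by positivity)
    apply Real.exp_le_exp.2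
    have : 0 ≤ r / (2*s) := by positivity
    have h2 : -t⁻¹ * s = -(s/t) := by field_simp
    rw [h2]; linarith

lemma phi_tendsto_atZero (b : ℝ) (hr : 0 < r) (ht : 0 < t) :
    Tendsto (fun s : ℝ => s ^ b * Real.exp (-(r / (2*s)) - s / t)) (𝓝[>] 0) (𝓝 0) := by
  set m : ℕ := ⌈-b⌉₊ + 1 with hm
  have hbm : (0:ℝ) < b + m := by
    have := Nat.le_ceil (-b); push_cast [hm]; linarith
  have hg : Tendsto (fun s : ℝ => (2*(m:ℝ)/r) ^ m * s ^ (b + m)) (𝓝[>] 0) (𝓝 0) := by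
    have hc : ContinuousAt (fun s : ℝ => s ^ (b + m)) 0 :=
      Real.continuousAt_rpow_const 0 (b + m) (Or.inr hbm.le)
    have := (hc.tendsto).mono_left (nhdsWithin_le_nhds (s := Set.Ioi 0))
    rw [Real.zero_rpow hbm.ne'] at this
    simpa using this.const_mul ((2*(m:ℝ)/r) ^ m)
  refine squeeze_zero' ?_ ?_ hg
  · filter_upwards [self_mem_nhdsWithin] with s hs
    have hs' : (0:ℝ) < s := hs
    positivity
  · filter_upwards [self_mem_nhdsWithin] with s hs
    have hs' : (0:ℝ) < s := hs
    calc s ^ b * Real.exp (-(r / (2*s)) - s / t)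
        ≤ s ^ b * ((2*(m:ℝ)/r) ^ m * s ^ m * Real.exp (-(s/t))) :=
          mul_le_mul_of_nonneg_left (key_exp_bound m hr hs' (s/t)) (by positivity)
      _ ≤ s ^ b * ((2*(m:ℝ)/r) ^ m * s ^ m * 1) := by
          refine mul_le_mul_of_nonneg_left ?_ (by positivity)
          refine mul_le_mul_of_nonneg_left (Real.exp_le_one_iff.2 (neg_nonpos.2 (by positivity))) ?_
          positivity
      _ = (2*(m:ℝ)/r) ^ m * s ^ (b + m) := by
          rw [Real.rpow_add hs', Real.rpow_natCast]; ring

lemma hasDerivAt_phi (c : ℝ) (hr : 0 < r) (ht : 0 < t) {s : ℝ} (hs : 0 < s) :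
    HasDerivAt (fun s : ℝ => s ^ c * Real.exp (-(r / (2*s)) - s / t))
      (c * (s ^ (c-1) * Real.exp (-(r / (2*s)) - s / t))
        + r/2 * (s ^ (c-2) * Real.exp (-(r / (2*s)) - s / t))
        - t⁻¹ * (s ^ c * Real.exp (-(r / (2*s)) - s / t))) s := by
  have h1 : HasDerivAt (fun s : ℝ => s ^ c) (c * s ^ (c-1)) s :=
    Real.hasDerivAt_rpow_const (Or.inl hs.ne')
  have h2 : HasDerivAt (fun s : ℝ => -(r / (2*s)) - s / t) (r / (2*s^2) - t⁻¹) s := by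
    have ha : HasDerivAt (fun s : ℝ => -(r / (2*s))) (r / (2*s^2)) s := by
      have := ((hasDerivAt_inv hs.ne').const_mul (r/2)).neg
      have e : (fun s : ℝ => -(r / (2*s))) = -(fun y : ℝ => r/2 * y⁻¹) := by
        funext u; simp only [Pi.neg_apply]; field_simp
      rw [e]; exact this.congr_deriv (by field_simp)
    have hb : HasDerivAt (fun s : ℝ => s / t) t⁻¹ s := by
      simpa using (hasDerivAt_id s).div_const t
    exact ha.sub hb
  have h3 := h1.mul h2.exp
  refine h3.congr_deriv ?_
  have e1 : s ^ c * (r / (2*s^2)) = r/2 * s ^ (c-2) := by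
    have : s ^ c = s ^ (c-2) * s^2 := by
      rw [← Real.rpow_natCast s 2, ← Real.rpow_add hs]; norm_num
    rw [this]; field_simp
  have e2 : s ^ c * (r / (2*s^2) - t⁻¹) = r/2 * s ^ (c-2) - t⁻¹ * s ^ c := by
    rw [mul_sub, e1]; ring
  rw [show s ^ c * (Real.exp (-(r / (2*s)) - s / t) * (r / (2*s^2) - t⁻¹))
        = Real.exp (-(r / (2*s)) - s / t) * (s ^ c * (r / (2*s^2) - t⁻¹)) by ring, e2]
  ring

end

lemma Jf_ibp (b : ℝ) {r t : ℝ} (hr : 0 < r) (ht : 0 < t) :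
    Jf (b+1) r t = t * ((b+1) * Jf b r t + r/2 * Jf (b-1) r t) := by
  set φ : ℝ → ℝ → ℝ := fun c s => s ^ c * Real.exp (-(r / (2*s)) - s / t) with hφ
  set f : ℝ → ℝ := fun s => if s ≤ 0 then 0 else φ (b+1) s with hf
  set f' : ℝ → ℝ := fun s => (b+1) * φ b s + r/2 * φ (b-1) s - t⁻¹ * φ (b+1) s with hf'
  have intb := Jf_integrableOn b hr ht
  have intb1 := Jf_integrableOn (b-1) hr ht
  have intb2 := Jf_integrableOn (b+1) hr ht
  have f'int : IntegrableOn f' (Set.Ioi 0) :=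
    ((intb.const_mul (b+1)).add (intb1.const_mul (r/2))).sub (intb2.const_mul t⁻¹)
  have hderiv : ∀ s ∈ Set.Ioi (0:ℝ), HasDerivAt f (f' s) s := by
    intro s hs
    have hs' : (0:ℝ) < s := hs
    have hev : f =ᶠ[𝓝 s] φ (b+1) := by
      filter_upwards [IsOpen.mem_nhds isOpen_Ioi hs] with u hu
      simp [hf, hφ, not_le.2 (show (0:ℝ) < u from hu)]
    have h := hasDerivAt_phi (b+1) hr ht hs'
    rw [show b + 1 - 1 = b by ring, show b + 1 - 2 = b - 1 by ring] at h
    exact h.congr_of_eventuallyEq hev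
  have hcont : ContinuousWithinAt f (Set.Ici 0) 0 := by
    have hf0 : f 0 = 0 := by simp [hf]
    rw [ContinuousWithinAt, hf0, ← Set.Ioi_insert, nhdsWithin_insert, tendsto_sup]
    constructor
    · simpa [hf0] using tendsto_pure_nhds f 0
    · refine (phi_tendsto_atZero (b+1) hr ht).congr' ?_
      filter_upwards [self_mem_nhdsWithin] with u hu
      simp [hf, hφ, not_le.2 (show (0:ℝ) < u from hu)]
  have htop : Tendsto f atTop (𝓝 0) := by
    refine (phi_tendsto_atTop (b+1) hr ht).congr' ?_
    filter_upwards [eventually_gt_atTop (0:ℝ)] with u hu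
    simp [hf, hφ, not_le.2 hu]
  have key : ∫ s in Set.Ioi (0:ℝ), f' s = 0 - f 0 :=
    integral_Ioi_of_hasDerivAt_of_tendsto hcont hderiv f'int htop
  have hf0 : f 0 = 0 := by simp [hf]
  rw [hf0, sub_zero] at key
  have expand : ∫ s in Set.Ioi (0:ℝ), f' s
      = (b+1) * Jf b r t + r/2 * Jf (b-1) r t - t⁻¹ * Jf (b+1) r t := by
    have h1 : IntegrableOn (fun s => (b+1) * φ b s + r/2 * φ (b-1) s) (Set.Ioi 0) :=
      (intb.const_mul (b+1)).add (intb1.const_mul (r/2))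
    have h2 : IntegrableOn (fun s => t⁻¹ * φ (b+1) s) (Set.Ioi 0) :=
      intb2.const_mul t⁻¹
    have h3 : IntegrableOn (fun s => (b+1) * φ b s) (Set.Ioi 0) := intb.const_mul (b+1)
    have h4 : IntegrableOn (fun s => r/2 * φ (b-1) s) (Set.Ioi 0) := intb1.const_mul (r/2)
    simp only [hf']
    rw [integral_sub h1 h2, integral_add h3 h4,
      integral_const_mul, integral_const_mul, integral_const_mul]
    rfl
  rw [expand] at key
  have ht' : t ≠ 0 := ht.ne'
  field_simp at key ⊢
  linarith

lemma hasDerivAt_Jf_r (b : ℝ) {r t : ℝ} (hr : 0 < r) (ht : 0 < t) :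
    HasDerivAt (fun r' => Jf b r' t) (-(1/2) * Jf (b-1) r t) r := by
  have key := hasDerivAt_integral_of_dominated_loc_of_deriv_le (μ := volume.restrict (Set.Ioi 0))
    (F := fun r' s => s ^ b * Real.exp (-(r' / (2*s)) - s / t))
    (F' := fun r' s => -(1/2) * (s ^ (b-1) * Real.exp (-(r' / (2*s)) - s / t)))
    (x₀ := r) (s := Metric.ball r (r/2))
    (bound := fun s => (1/2) * (s ^ (b-1) * Real.exp (-((r/2) / (2*s)) - s / t)))
    (Metric.ball_mem_nhds _ (by positivity))
    (Eventually.of_forall fun r' => (phi_contOn b r' t).aestronglyMeasurable measurableSet_Ioi)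
    (Jf_integrableOn b hr ht)
    (((phi_contOn (b-1) r t).aestronglyMeasurable measurableSet_Ioi).const_mul _)
    ?hbound
    ((Jf_integrableOn (b-1) (by positivity) ht).const_mul _)
    ?hdiff
  · have := key.2
    rwa [integral_const_mul] at this
  case hbound =>
    rw [ae_restrict_iff' measurableSet_Ioi]
    refine ae_of_all _ fun s hs => fun r' hr' => ?_
    have hs' : (0:ℝ) < s := hs
    rw [Metric.mem_ball, Real.dist_eq] at hr'
    have hr2 : r/2 < r' := by cases abs_lt.1 hr' ; linarith
    have hE : Real.exp (-(r' / (2*s)) - s / t) ≤ Real.exp (-((r/2) / (2*s)) - s / t) := by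
      apply Real.exp_le_exp.2
      have : (r/2) / (2*s) ≤ r' / (2*s) := by
        apply div_le_div_of_nonneg_right ?_ (by positivity)
        · linarith
      linarith
    have h0 : (0:ℝ) < s ^ (b-1) * Real.exp (-(r' / (2*s)) - s / t) := by positivity
    rw [Real.norm_eq_abs, abs_mul, abs_of_pos h0, abs_neg, abs_of_pos (by norm_num : (0:ℝ) < 1/2)]
    exact mul_le_mul_of_nonneg_left (mul_le_mul_of_nonneg_left hE (by positivity)) (by norm_num)
  case hdiff =>
    rw [ae_restrict_iff' measurableSet_Ioi]
    refine ae_of_all _ fun s hs => fun r' _ => ?_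
    have hs' : (0:ℝ) < s := hs
    have hinner : HasDerivAt (fun r'' : ℝ => -(r'' / (2*s)) - s / t) (-(1/(2*s))) r' := by
      simpa using (((hasDerivAt_id r').div_const (2*s)).neg.sub_const (s/t))
    have h := (hinner.exp.const_mul (s ^ b))
    refine h.congr_deriv ?_; symm
    have hsb := Real.rpow_add hs' (b-1) 1
    rw [Real.rpow_one, sub_add_cancel] at hsb
    rw [hsb]
    field_simp

lemma hasDerivAt_Jf_t (b : ℝ) {r t : ℝ} (hr : 0 < r) (ht : 0 < t) :
    HasDerivAt (fun t' => Jf b r t') (t⁻¹ * t⁻¹ * Jf (b+1) r t) t := by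
  have key := hasDerivAt_integral_of_dominated_loc_of_deriv_le (μ := volume.restrict (Set.Ioi 0))
    (F := fun t' s => s ^ b * Real.exp (-(r / (2*s)) - s / t'))
    (F' := fun t' s => (t'⁻¹ * t'⁻¹) * (s ^ (b+1) * Real.exp (-(r / (2*s)) - s / t')))
    (x₀ := t) (s := Metric.ball t (t/2))
    (bound := fun s => (4/t^2) * (s ^ (b+1) * Real.exp (-(r / (2*s)) - s / (3*t/2))))
    (Metric.ball_mem_nhds _ (by positivity))
    (Eventually.of_forall fun t' => (phi_contOn b r t').aestronglyMeasurable measurableSet_Ioi)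
    (Jf_integrableOn b hr ht)
    (((phi_contOn (b+1) r t).aestronglyMeasurable measurableSet_Ioi).const_mul _)
    ?hbound
    ((Jf_integrableOn (b+1) hr (by positivity)).const_mul _)
    ?hdiff
  · have := key.2
    rwa [integral_const_mul] at this
  case hbound =>
    rw [ae_restrict_iff' measurableSet_Ioi]
    refine ae_of_all _ fun s hs => fun t' ht' => ?_
    have hs' : (0:ℝ) < s := hs
    rw [Metric.mem_ball, Real.dist_eq] at ht'
    obtain ⟨ht1, ht2⟩ := abs_lt.1 ht'
    have ht3 : t/2 < t' := by linarith
    have ht4 : t' < 3*t/2 := by linarith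
    have ht5 : (0:ℝ) < t' := by linarith
    have hE : Real.exp (-(r / (2*s)) - s / t') ≤ Real.exp (-(r / (2*s)) - s / (3*t/2)) := by
      apply Real.exp_le_exp.2
      have : s / (3*t/2) ≤ s / t' := by
        apply div_le_div_of_nonneg_left hs'.le ht5 ht4.le
      linarith
    have h0 : (0:ℝ) < s ^ (b+1) * Real.exp (-(r / (2*s)) - s / t') := by positivity
    have hti : t'⁻¹ * t'⁻¹ ≤ 4/t^2 := by
      have h1 : t'⁻¹ ≤ 2/t := by
        rw [inv_le_iff_one_le_mul₀ ht5]
        rw [div_mul_eq_mul_div, le_div_iff₀ ht]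
        linarith
      calc t'⁻¹ * t'⁻¹ ≤ (2/t) * (2/t) := by
            apply mul_le_mul h1 h1 (by positivity) (by positivity)
        _ = 4/t^2 := by ring
    rw [Real.norm_eq_abs, abs_mul, abs_of_pos h0, abs_of_pos (by positivity : (0:ℝ) < t'⁻¹ * t'⁻¹)]
    exact mul_le_mul hti (mul_le_mul_of_nonneg_left hE (by positivity)) (by positivity)
      (by positivity)
  case hdiff =>
    rw [ae_restrict_iff' measurableSet_Ioi]
    refine ae_of_all _ fun s hs => fun t' ht' => ?_
    have hs' : (0:ℝ) < s := hs
    rw [Metric.mem_ball, Real.dist_eq] at ht'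
    obtain ⟨ht1, ht2⟩ := abs_lt.1 ht'
    have ht5 : (0:ℝ) < t' := by linarith
    have hinner : HasDerivAt (fun u : ℝ => -(r / (2*s)) - s / u) (s / t'^2) t' := by
      have h0 := (((hasDerivAt_inv ht5.ne').const_mul s).neg).const_add (-(r / (2*s)))
      have : HasDerivAt (fun u : ℝ => -(r / (2*s)) - s / u) (-(s * -(t'^2)⁻¹)) t' := by
        refine h0.congr_of_eventuallyEq (Eventually.of_forall fun u => ?_)
        simp only [Pi.neg_apply, div_eq_mul_inv]; ring
      convert this using 1
      field_simp
    have h := (hinner.exp.const_mul (s ^ b))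
    refine h.congr_deriv ?_; symm
    have hsb : s ^ (b+1) = s ^ b * s := by
      rw [Real.rpow_add hs', Real.rpow_one]
    show t'⁻¹ * t'⁻¹ * (s ^ (b+1) * Real.exp (-(r / (2*s)) - s / t'))
      = s ^ b * (Real.exp (-(r / (2*s)) - s / t') * (s / t'^2))
    rw [hsb]
    field_simp

noncomputable def qc (n : ℕ) (μ : ℝ) : ℝ := (2*Real.pi) ^ (-(n:ℝ)/2) / Real.Gamma μ

noncomputable def qb (n : ℕ) (μ : ℝ) : ℝ := μ - 1 - (n:ℝ)/2

lemma qn_eq (n : ℕ) (μ : ℝ) (x : Fin n → ℝ) {t : ℝ} (ht : 0 < t) :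
    qn n μ x t = qc n μ * t ^ (-μ) * Jf (qb n μ) (∑ i, (x i)^2) t := by
  rw [qn, Jf, ← integral_const_mul]
  apply setIntegral_congr_fun measurableSet_Ioi
  intro s hs
  have hs' : (0:ℝ) < s := hs
  have e1 : Real.exp (-((∑ i, (x i)^2) / (2*s)) - s/t)
      = Real.exp (-(∑ i, (x i)^2) / (2*s)) * Real.exp (-s/t) := by
    rw [← Real.exp_add]; congr 1; ring
  have e2 : (2*Real.pi*s) ^ (-(n:ℝ)/2) = (2*Real.pi) ^ (-(n:ℝ)/2) * s ^ (-(n:ℝ)/2) :=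
    Real.mul_rpow (by positivity) hs'.le
  have e3 : s ^ (qb n μ) = s ^ (-(n:ℝ)/2) * s ^ (μ-1) := by
    rw [← Real.rpow_add hs']; congr 1; rw [qb]; ring
  have e4 : t ^ (-μ) = (t ^ μ)⁻¹ := Real.rpow_neg ht.le μ
  simp only [e1, e2, e3, e4, qc]
  ring

lemma sum_update_sq {n : ℕ} (z : Fin n → ℝ) (i : Fin n) (y : ℝ) :
    ∑ j, (Function.update z i y j)^2 = y^2 + ∑ j ∈ Finset.univ.erase i, (z j)^2 := by
  rw [← Finset.add_sum_erase Finset.univ (fun j => (Function.update z i y j)^2)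
    (Finset.mem_univ i)]
  congr 1
  · simp
  · apply Finset.sum_congr rfl
    intro j hj
    rw [Function.update_of_ne (Finset.ne_of_mem_erase hj)]

lemma sum_sq_split {n : ℕ} (z : Fin n → ℝ) (i : Fin n) :
    ∑ j, (z j)^2 = (z i)^2 + ∑ j ∈ Finset.univ.erase i, (z j)^2 := by
  have := sum_update_sq z i (z i)
  rwa [Function.update_eq_self] at this

lemma hasDerivAt_Jf_sq (b K t y : ℝ) (hK : 0 < y^2 + K) (ht : 0 < t) :
    HasDerivAt (fun y' => Jf b (y'^2 + K) t) (-y * Jf (b-1) (y^2+K) t) y := by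
  have h1 := hasDerivAt_Jf_r b hK ht
  have h2 : HasDerivAt (fun y' : ℝ => y'^2 + K) (2*y) y := by
    simpa using (hasDerivAt_pow 2 y).add_const K
  have h3 := h1.comp y h2
  refine h3.congr_deriv ?_
  ring

lemma pd_of_radial {n : ℕ} (G G' : ℝ → ℝ) (hG : ∀ {ρ : ℝ}, 0 < ρ → HasDerivAt G (G' ρ) ρ)
    (f : (Fin n → ℝ) → ℝ) (hf : ∀ z : Fin n → ℝ, 0 < ∑ j, (z j)^2 → f z = G (∑ j, (z j)^2))
    (i : Fin n) (x : Fin n → ℝ) (hx : 0 < ∑ j, (x j)^2) :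
    pd f i x = 2 * x i * G' (∑ j, (x j)^2) := by
  set K := ∑ j ∈ Finset.univ.erase i, (x j)^2 with hK
  have hsum : ∑ j, (x j)^2 = (x i)^2 + K := sum_sq_split x i
  have hev : (fun y => f (Function.update x i y)) =ᶠ[𝓝 (x i)] fun y => G (y^2 + K) := by
    have hopen : IsOpen {y : ℝ | 0 < y^2 + K} := isOpen_lt continuous_const (by fun_prop)
    have hmem : x i ∈ {y : ℝ | 0 < y^2 + K} := by simpa [← hsum] using hx
    filter_upwards [hopen.mem_nhds hmem] with y hy
    rw [hf _ (by rwa [sum_update_sq]), sum_update_sq]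
  rw [pd, hev.deriv_eq]
  have hD : HasDerivAt (fun y => G (y^2 + K)) (G' ((x i)^2 + K) * (2 * x i)) (x i) := by
    have h2 : HasDerivAt (fun y' : ℝ => y'^2 + K) (2*(x i)) (x i) := by
      simpa using (hasDerivAt_pow 2 (x i)).add_const K
    exact (hG (hsum ▸ hx)).comp (x i) h2
  rw [hD.deriv, ← hsum]
  ring

lemma pd_mul_radial {n : ℕ} (G G' : ℝ → ℝ) (hG : ∀ {ρ : ℝ}, 0 < ρ → HasDerivAt G (G' ρ) ρ)
    (f : (Fin n → ℝ) → ℝ) (i : Fin n)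
    (hf : ∀ z : Fin n → ℝ, 0 < ∑ j, (z j)^2 → f z = z i * G (∑ j, (z j)^2))
    (x : Fin n → ℝ) (hx : 0 < ∑ j, (x j)^2) :
    pd f i x = G (∑ j, (x j)^2) + 2 * (x i)^2 * G' (∑ j, (x j)^2) := by
  set K := ∑ j ∈ Finset.univ.erase i, (x j)^2 with hK
  have hsum : ∑ j, (x j)^2 = (x i)^2 + K := sum_sq_split x i
  have hev : (fun y => f (Function.update x i y)) =ᶠ[𝓝 (x i)] fun y => y * G (y^2 + K) := by
    have hopen : IsOpen {y : ℝ | 0 < y^2 + K} := isOpen_lt continuous_const (by fun_prop)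
    have hmem : x i ∈ {y : ℝ | 0 < y^2 + K} := by simpa [← hsum] using hx
    filter_upwards [hopen.mem_nhds hmem] with y hy
    rw [hf _ (by rwa [sum_update_sq]), sum_update_sq, Function.update_self]
  rw [pd, hev.deriv_eq]
  have h2 : HasDerivAt (fun y' : ℝ => y'^2 + K) (2*(x i)) (x i) := by
    simpa using (hasDerivAt_pow 2 (x i)).add_const K
  have hD : HasDerivAt (fun y => y * G (y^2 + K))
      (1 * G ((x i)^2 + K) + x i * (G' ((x i)^2 + K) * (2 * x i))) (x i) :=
    (hasDerivAt_id (x i)).mul ((hG (hsum ▸ hx)).comp (x i) h2)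
  rw [hD.deriv, ← hsum]
  ring

lemma sum_lin {n : ℕ} (x : Fin n → ℝ) (a c : ℝ) :
    ∑ i : Fin n, (a + 2*(x i)^2*c) = n*a + 2*(∑ i, (x i)^2)*c := by
  rw [Finset.sum_add_distrib, Finset.sum_const, Finset.card_univ, Fintype.card_fin,
    nsmul_eq_mul]
  congr 1
  calc ∑ i, 2*(x i)^2*c = ∑ i, (x i)^2*(2*c) := Finset.sum_congr rfl (by intros; ring)
    _ = (∑ i, (x i)^2)*(2*c) := (Finset.sum_mul _ _ _).symm
    _ = 2*(∑ i, (x i)^2)*c := by ring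

/-- the density of `(B¹(G₁(t)), …, Bⁿ(G₁(t)))` satisfies the p.d.e.
`4 ∂q/∂t = (2μ − n) Δq − Δ(x · ∇q)` for `x ≠ 0`, `t > 0`. -/
theorem stmt_16 (μ : ℝ) (hμ : 0 < μ) (n : ℕ) (hn : 1 ≤ n) :
    ∀ (x : Fin n → ℝ) (t : ℝ), x ≠ 0 → 0 < t →
      4 * deriv (fun τ => qn n μ x τ) t
        = (2 * μ - n) * lap (fun y => qn n μ y t) x
          - lap (fun y => ∑ i, y i * pd (fun z => qn n μ z t) i y) x := by
  intro x t hx ht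
  set B := qb n μ with hB
  set A := qc n μ * t ^ (-μ) with hA
  set R := ∑ j, (x j)^2 with hRdef
  have hR : 0 < R := by
    obtain ⟨i, hi⟩ := Function.ne_iff.1 hx
    have h1 : 0 < (x i)^2 := pow_two_pos_of_ne_zero hi
    exact lt_of_lt_of_le h1
      (Finset.single_le_sum (fun j _ => sq_nonneg (x j)) (Finset.mem_univ i))
  have htne : t ≠ 0 := ht.ne'
  -- scalar derivative facts
  have hG : ∀ {ρ : ℝ}, 0 < ρ → HasDerivAt (fun ρ' => A * Jf B ρ' t)
      (A * (-(1/2) * Jf (B-1) ρ t)) ρ :=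
    fun hρ => (hasDerivAt_Jf_r B hρ ht).const_mul A
  have hH : ∀ {ρ : ℝ}, 0 < ρ → HasDerivAt (fun ρ' => -A * Jf (B-1) ρ' t)
      (A/2 * Jf (B-2) ρ t) ρ := by
    intro ρ hρ
    have h := (hasDerivAt_Jf_r (B-1) hρ ht).const_mul (-A)
    rw [show B-1-1 = B-2 by ring] at h
    refine h.congr_deriv ?_; ring
  have hH' : ∀ {ρ : ℝ}, 0 < ρ → HasDerivAt (fun ρ' => A/2 * Jf (B-2) ρ' t)
      (-A/4 * Jf (B-3) ρ t) ρ := by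
    intro ρ hρ
    have h := (hasDerivAt_Jf_r (B-2) hρ ht).const_mul (A/2)
    rw [show B-2-1 = B-3 by ring] at h
    refine h.congr_deriv ?_; ring
  -- radial representation of qn
  have fact1 : ∀ z : Fin n → ℝ, 0 < ∑ j, (z j)^2 →
      qn n μ z t = A * Jf B (∑ j, (z j)^2) t := by
    intro z _
    rw [qn_eq n μ z ht, ← hB, hA]
  -- first derivative of qn
  have fact2 : ∀ z : Fin n → ℝ, 0 < ∑ j, (z j)^2 → ∀ i,
      pd (fun y => qn n μ y t) i z = z i * (-A * Jf (B-1) (∑ j, (z j)^2) t) := by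
    intro z hz i
    have := pd_of_radial (fun ρ => A * Jf B ρ t) (fun ρ => A * (-(1/2) * Jf (B-1) ρ t))
      hG (fun y => qn n μ y t) fact1 i z hz
    rw [this]; ring
  -- Laplacian of qn
  have hlapq : lap (fun y => qn n μ y t) x
      = (n:ℝ) * (-A * Jf (B-1) R t) + 2*R*(A/2 * Jf (B-2) R t) := by
    rw [lap]
    have e : ∀ i : Fin n, pd (pd (fun y => qn n μ y t) i) i x
        = (-A * Jf (B-1) R t) + 2*(x i)^2 * (A/2 * Jf (B-2) R t) :=
      fun i => pd_mul_radial (fun ρ => -A * Jf (B-1) ρ t) (fun ρ => A/2 * Jf (B-2) ρ t)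
        hH _ i (fun z hz => fact2 z hz i) x hR
    rw [Finset.sum_congr rfl (fun i _ => e i), sum_lin, ← hRdef]
  -- radial representation of x·∇qn
  have fact4 : ∀ z : Fin n → ℝ, 0 < ∑ j, (z j)^2 →
      (∑ j, z j * pd (fun y => qn n μ y t) j z)
        = (∑ j, (z j)^2) * (-A * Jf (B-1) (∑ j, (z j)^2) t) := by
    intro z hz
    rw [Finset.sum_congr rfl (fun j _ => by rw [fact2 z hz j]), Finset.sum_mul]
    exact Finset.sum_congr rfl (by intros; ring)
  have hG2 : ∀ {ρ : ℝ}, 0 < ρ → HasDerivAt (fun ρ' => ρ' * (-A * Jf (B-1) ρ' t))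
      (-A * Jf (B-1) ρ t + ρ * (A/2 * Jf (B-2) ρ t)) ρ := by
    intro ρ hρ
    have h := (hasDerivAt_id ρ).mul (hH hρ)
    simp only [id_eq] at h
    refine h.congr_deriv ?_; ring
  -- first derivative of x·∇qn
  have fact5 : ∀ z : Fin n → ℝ, 0 < ∑ j, (z j)^2 → ∀ i,
      pd (fun y => ∑ j, y j * pd (fun w => qn n μ w t) j y) i z
        = z i * (2*(-A * Jf (B-1) (∑ j, (z j)^2) t
            + (∑ j, (z j)^2) * (A/2 * Jf (B-2) (∑ j, (z j)^2) t))) := by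
    intro z hz i
    have := pd_of_radial (fun ρ => ρ * (-A * Jf (B-1) ρ t))
      (fun ρ => -A * Jf (B-1) ρ t + ρ * (A/2 * Jf (B-2) ρ t)) hG2
      (fun y => ∑ j, y j * pd (fun w => qn n μ w t) j y) fact4 i z hz
    rw [this]; ring
  have hH2 : ∀ {ρ : ℝ}, 0 < ρ → HasDerivAt
      (fun ρ' => 2*(-A * Jf (B-1) ρ' t + ρ' * (A/2 * Jf (B-2) ρ' t)))
      (2*(A/2 * Jf (B-2) ρ t + (A/2 * Jf (B-2) ρ t + ρ * (-A/4 * Jf (B-3) ρ t)))) ρ := by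
    intro ρ hρ
    have h := ((hH hρ).add ((hasDerivAt_id ρ).mul (hH' hρ))).const_mul 2
    simp only [id_eq] at h
    refine h.congr_deriv ?_; ring
  -- Laplacian of x·∇qn
  have hlaph : lap (fun y => ∑ j, y j * pd (fun w => qn n μ w t) j y) x
      = (n:ℝ) * (2*(-A * Jf (B-1) R t + R * (A/2 * Jf (B-2) R t)))
        + 2*R*(2*(A/2 * Jf (B-2) R t + (A/2 * Jf (B-2) R t + R * (-A/4 * Jf (B-3) R t)))) := by
    rw [lap]
    have e : ∀ i : Fin n, pd (pd (fun y => ∑ j, y j * pd (fun w => qn n μ w t) j y) i) i x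
        = (2*(-A * Jf (B-1) R t + R * (A/2 * Jf (B-2) R t)))
          + 2*(x i)^2 * (2*(A/2 * Jf (B-2) R t + (A/2 * Jf (B-2) R t + R * (-A/4 * Jf (B-3) R t)))) :=
      fun i => pd_mul_radial _ _ hH2 _ i (fun z hz => fact5 z hz i) x hR
    rw [Finset.sum_congr rfl (fun i _ => e i), sum_lin, ← hRdef]
  -- time derivative
  have hevt : (fun τ => qn n μ x τ) =ᶠ[𝓝 t] fun τ => qc n μ * τ ^ (-μ) * Jf B R τ := by
    filter_upwards [IsOpen.mem_nhds isOpen_Ioi ht] with τ hτ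
    rw [qn_eq n μ x hτ, ← hB, ← hRdef]
  have hderivt : deriv (fun τ => qn n μ x τ) t
      = -μ * t⁻¹ * (A * Jf B R t) + t⁻¹ * (t⁻¹ * (A * Jf (B+1) R t)) := by
    rw [hevt.deriv_eq]
    have h1 : HasDerivAt (fun τ : ℝ => τ ^ (-μ)) (-μ * t ^ (-μ-1)) t :=
      Real.hasDerivAt_rpow_const (Or.inl htne)
    have h3 := (h1.const_mul (qc n μ)).mul (hasDerivAt_Jf_t B hR ht)
    have h3' : HasDerivAt (fun τ : ℝ => qc n μ * τ ^ (-μ) * Jf B R τ) _ t := h3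
    rw [h3'.deriv, hA, show t ^ (-μ-1) = t ^ (-μ) * t⁻¹ from by
      rw [show -μ-1 = -μ + -1 by ring, Real.rpow_add ht, Real.rpow_neg_one]]
    ring
  -- integration by parts identities
  have F0 : t⁻¹ * Jf (B+1) R t = (B+1) * Jf B R t + R/2 * Jf (B-1) R t := by
    rw [Jf_ibp B hR ht]; field_simp
  have F1 : t⁻¹ * Jf B R t = B * Jf (B-1) R t + R/2 * Jf (B-2) R t := by
    have h := Jf_ibp (B-1) hR ht
    rw [show B-1+1 = B by ring, show B-1-1 = B-2 by ring] at h
    rw [h]; field_simp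
  have F2 : t⁻¹ * Jf (B-1) R t = (B-1) * Jf (B-2) R t + R/2 * Jf (B-3) R t := by
    have h := Jf_ibp (B-2) hR ht
    rw [show B-2+1 = B-1 by ring, show B-2-1 = B-3 by ring] at h
    rw [h]; field_simp
  have hBval : B = μ - 1 - (n:ℝ)/2 := by rw [hB, qb]
  rw [hderivt, hlapq, hlaph]
  rw [hBval] at F0 F1 F2 ⊢
  linear_combination (4*t⁻¹*A) * F0 + (-2*(n:ℝ)*A) * F1 + (2*A*R) * F2
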